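/- Let A be a real symmetric positive definite n×n matrix and Z a real n×m matrix with injective associated linear map, so that E = Zᵀ A Z is invertible, and let Q = Z E⁻¹ Zᵀ. Then for every b ∈ ℝⁿ, Q b minimises the A-norm distance to A⁻¹ b over the column space of Z: for every u in the column space of Z, (A⁻¹ ⬝ᵥ b − Q ⬝ᵥ b) ⬝ᵥ (A ⬝ᵥ (A⁻¹ ⬝ᵥ b − Q ⬝ᵥ b)) ≤ (A⁻¹ ⬝ᵥ b − u) ⬝ᵥ (A ⬝ᵥ (A⁻¹ ⬝ᵥ b − u)). In other words, Q b is the A-orthogonal projection of A⁻¹ b onto the coarse space. -/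

import Mathlib

open Matrix

/-- Let `A` be real symmetric positive definite and `Z` have injective associated linear
map, so that `E = Zᵀ * A * Z` is invertible, and let `Q = Z * E⁻¹ * Zᵀ`. Then for every
`b`, `Q *ᵥ b` minimises the `A`-norm distance to `A⁻¹ *ᵥ b` over the column space of `Z`:
`Q *ᵥ b` is the `A`-orthogonal projection of `A⁻¹ *ᵥ b` onto the coarse space. -/
theorem coarse_correction_A_orthogonal_projection (n m : ℕ)
    (A : Matrix (Fin n) (Fin n) ℝ) (hA : A.PosDef)
    (Z : Matrix (Fin n) (Fin m) ℝ) (hZ : Function.Injective Z.mulVecLin) :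
    ∀ b : Fin n → ℝ, ∀ u ∈ LinearMap.range Z.mulVecLin,
      (A⁻¹ *ᵥ b - (Z * (Zᵀ * A * Z)⁻¹ * Zᵀ) *ᵥ b) ⬝ᵥ
          (A *ᵥ (A⁻¹ *ᵥ b - (Z * (Zᵀ * A * Z)⁻¹ * Zᵀ) *ᵥ b)) ≤
        (A⁻¹ *ᵥ b - u) ⬝ᵥ (A *ᵥ (A⁻¹ *ᵥ b - u)) := by
  intro b u hu
  obtain ⟨c, rfl⟩ := hu
  have hAt : Aᵀ = A := hA.isHermitian.eq
  have hE : (Zᵀ * A * Z).PosDef := by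
    rw [posDef_iff_dotProduct_mulVec]
    constructor
    · show (Zᵀ * A * Z)ᴴ = _
      have : (Zᵀ * A * Z)ᴴ = Zᵀ * Aᵀ * Z := by
        simp [conjTranspose_mul, Matrix.mul_assoc]
      rw [this, hAt]
    · intro x hx
      have hZx : Z *ᵥ x ≠ 0 := by
        intro h
        exact hx (hZ (by simpa [Matrix.mulVecLin_apply] using h))
      have h := hA.dotProduct_mulVec_pos hZx
      simp only [star_trivial] at h ⊢
      calc (0:ℝ) < (Z *ᵥ x) ⬝ᵥ (A *ᵥ (Z *ᵥ x)) := h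
        _ = x ⬝ᵥ ((Zᵀ * A * Z) *ᵥ x) := by
            rw [← Matrix.mulVec_mulVec, ← Matrix.mulVec_mulVec,
              dotProduct_mulVec x Zᵀ, vecMul_transpose]
  have hAinv : A * A⁻¹ = 1 := Matrix.mul_nonsing_inv A ((Matrix.isUnit_iff_isUnit_det A).mp hA.isUnit)
  have hEinv : (Zᵀ * A * Z) * (Zᵀ * A * Z)⁻¹ = 1 :=
    Matrix.mul_nonsing_inv _ ((Matrix.isUnit_iff_isUnit_det _).mp hE.isUnit)
  set e : Fin n → ℝ := A⁻¹ *ᵥ b - (Z * (Zᵀ * A * Z)⁻¹ * Zᵀ) *ᵥ b with he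
  -- orthogonality
  have key : Zᵀ *ᵥ (A *ᵥ e) = 0 := by
    rw [he, mulVec_sub, mulVec_sub, mulVec_mulVec, mulVec_mulVec, mulVec_mulVec,
      mulVec_mulVec, ← Matrix.mul_assoc, ← Matrix.mul_assoc]
    have h1 : Zᵀ * (A * A⁻¹) = Zᵀ := by rw [hAinv, Matrix.mul_one]
    have h2 : Zᵀ * A * Z * (Zᵀ * A * Z)⁻¹ * Zᵀ = Zᵀ := by
      rw [hEinv, Matrix.one_mul]
    rw [Matrix.mul_assoc Zᵀ A A⁻¹, h1, h2, sub_self]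
  -- decompose
  set d : Fin m → ℝ := (Zᵀ * A * Z)⁻¹ *ᵥ (Zᵀ *ᵥ b) - c with hd
  have hdecomp : A⁻¹ *ᵥ b - Z.mulVecLin c = e + Z *ᵥ d := by
    rw [he, hd, mulVec_sub, Matrix.mulVecLin_apply, mulVec_mulVec, mulVec_mulVec,
      Matrix.mul_assoc]
    abel
  have horth : (Z *ᵥ d) ⬝ᵥ (A *ᵥ e) = 0 := by
    rw [← vecMul_transpose, ← dotProduct_mulVec, key, dotProduct_zero]
  have horth2 : e ⬝ᵥ (A *ᵥ (Z *ᵥ d)) = 0 := by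
    rw [dotProduct_mulVec, ← hAt, vecMul_transpose, dotProduct_comm]; exact horth
  have hpos : 0 ≤ (Z *ᵥ d) ⬝ᵥ (A *ᵥ (Z *ᵥ d)) := by
    have := hA.posSemidef.dotProduct_mulVec_nonneg (Z *ᵥ d); simpa only [star_trivial] using this
  rw [hdecomp]
  have expand : (e + Z *ᵥ d) ⬝ᵥ (A *ᵥ (e + Z *ᵥ d)) =
      e ⬝ᵥ (A *ᵥ e) + e ⬝ᵥ (A *ᵥ (Z *ᵥ d)) + (Z *ᵥ d) ⬝ᵥ (A *ᵥ e)
        + (Z *ᵥ d) ⬝ᵥ (A *ᵥ (Z *ᵥ d)) := by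
    simp only [mulVec_add, add_dotProduct, dotProduct_add]
    ring
  rw [expand, horth, horth2]
  linarith
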